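/- arXiv:1904.06745 — 4 statements merged into one kernel-verified Lean document; each statement's English description precedes it below -/
import Mathlib

section
/- (Hypercube Continuity Lemma) For every real constant C1 > 0 and every real ξ with 0 < ξ ≤ 1, there exists N such that for all integers n ≥ N the following holds: for all integers l1, l2 with n/2 − √(C1·n·ln n) ≤ l1 ≤ l2 ≤ n/2 + √(C1·n·ln n), if l2 − l1 ≤ (1/(10·√C1))·ξ·√(n/ln n), then 1 − ξ ≤ binom(n, l1)/binom(n, l2) ≤ 1 + ξ. -/
private lemma chain_up (a : ℝ) (ha : 0 ≤ a) (f : ℕ → ℝ) :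
    ∀ k l0, (∀ j, j < k → f (l0 + j) ≤ a * f (l0 + j + 1)) → f l0 ≤ a ^ k * f (l0 + k) := by
  intro k
  induction k with
  | zero => intro l0 _; simp
  | succ k ih =>
    intro l0 h
    have h0 : f l0 ≤ a * f (l0 + 1) := by simpa using h 0 (Nat.succ_pos k)
    have h1 : f (l0 + 1) ≤ a ^ k * f (l0 + 1 + k) := by
      apply ih
      intro j hj
      have := h (j + 1) (by omega)
      have e1 : l0 + (j + 1) = l0 + 1 + j := by omega
      rwa [e1] at this
    have e : l0 + 1 + k = l0 + (k + 1) := by omega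
    rw [e] at h1
    calc f l0 ≤ a * f (l0 + 1) := h0
      _ ≤ a * (a ^ k * f (l0 + (k + 1))) := mul_le_mul_of_nonneg_left h1 ha
      _ = a ^ (k + 1) * f (l0 + (k + 1)) := by ring

private lemma chain_down (a : ℝ) (ha : 0 ≤ a) (f : ℕ → ℝ) :
    ∀ k l0, (∀ j, j < k → f (l0 + j + 1) ≤ a * f (l0 + j)) → f (l0 + k) ≤ a ^ k * f l0 := by
  intro k
  induction k with
  | zero => intro l0 _; simp
  | succ k ih =>
    intro l0 h
    have h1 : f (l0 + 1 + k) ≤ a ^ k * f (l0 + 1) := by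
      apply ih
      intro j hj
      have := h (j + 1) (by omega)
      have e1 : l0 + (j + 1) = l0 + 1 + j := by omega
      rwa [e1] at this
    have h0 : f (l0 + 1) ≤ a * f l0 := by simpa using h 0 (Nat.succ_pos k)
    have e : l0 + 1 + k = l0 + (k + 1) := by omega
    rw [e] at h1
    calc f (l0 + (k + 1)) ≤ a ^ k * f (l0 + 1) := h1
      _ ≤ a ^ k * (a * f l0) := mul_le_mul_of_nonneg_left h0 (pow_nonneg ha k)
      _ = a ^ (k + 1) * f l0 := by ring

set_option maxHeartbeats 1000000 in
/-- **Hypercube Continuity Lemma.** For every real constant `C1 > 0` and every real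
`ξ` with `0 < ξ ≤ 1`, there exists `N` such that for all `n ≥ N`: for all integers
`l1 ≤ l2` lying between `n/2 − √(C1·n·ln n)` and `n/2 + √(C1·n·ln n)`, if
`l2 − l1 ≤ (1/(10·√C1))·ξ·√(n/ln n)`, then
`1 − ξ ≤ C(n,l1)/C(n,l2) ≤ 1 + ξ`. -/
theorem hypercube_continuity (C1 ξ : ℝ) (hC1 : 0 < C1) (hξ0 : 0 < ξ) (hξ1 : ξ ≤ 1) :
    ∃ N : ℕ, ∀ n : ℕ, N ≤ n → ∀ l1 l2 : ℕ,
      (n : ℝ) / 2 - Real.sqrt (C1 * n * Real.log n) ≤ (l1 : ℝ) →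
      l1 ≤ l2 →
      (l2 : ℝ) ≤ (n : ℝ) / 2 + Real.sqrt (C1 * n * Real.log n) →
      (l2 : ℝ) - (l1 : ℝ) ≤ (1 / (10 * Real.sqrt C1)) * ξ * Real.sqrt ((n : ℝ) / Real.log n) →
      1 - ξ ≤ (n.choose l1 : ℝ) / (n.choose l2 : ℝ) ∧
        (n.choose l1 : ℝ) / (n.choose l2 : ℝ) ≤ 1 + ξ := by
  refine ⟨max 2 (Nat.ceil ((200 * C1) ^ 2)), fun n hn l1 l2 h1 h12 h2 hk => ?_⟩
  have hsC1 : 0 < Real.sqrt C1 := Real.sqrt_pos.mpr hC1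
  have hn2 : (2 : ℕ) ≤ n := le_trans (le_max_left _ _) hn
  have hnR : (2 : ℝ) ≤ n := by exact_mod_cast hn2
  have hn0 : (0 : ℝ) < n := by linarith
  have hlog : 0 < Real.log n := Real.log_pos (by linarith)
  have hnC : (200 * C1) ^ 2 ≤ (n : ℝ) := by
    have h := le_trans (le_max_right 2 (Nat.ceil ((200 * C1) ^ 2))) hn
    calc (200 * C1) ^ 2 ≤ (Nat.ceil ((200 * C1) ^ 2) : ℝ) := Nat.le_ceil _
      _ ≤ n := by exact_mod_cast h
  have hsn : 200 * C1 ≤ Real.sqrt n := by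
    have := Real.sqrt_le_sqrt hnC
    rwa [Real.sqrt_sq (by positivity)] at this
  have hlogle : Real.log n ≤ 2 * Real.sqrt n := by
    have h := Real.log_le_sub_one_of_pos (Real.sqrt_pos.mpr hn0)
    rw [Real.log_sqrt hn0.le] at h
    linarith
  have hsq : Real.sqrt (n : ℝ) ^ 2 = n := Real.sq_sqrt hn0.le
  have hClog : C1 * Real.log n ≤ n / 100 := by
    nlinarith [Real.sqrt_nonneg (n : ℝ), mul_le_mul_of_nonneg_left hlogle hC1.le,
      mul_le_mul_of_nonneg_right hsn (Real.sqrt_nonneg (n : ℝ))]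
  set D := Real.sqrt (C1 * n * Real.log n) with hDdef
  have hD0 : (0 : ℝ) ≤ D := Real.sqrt_nonneg _
  have hD : D ≤ n / 10 := by
    have h : C1 * n * Real.log n ≤ ((n : ℝ) / 10) ^ 2 := by nlinarith [hClog, hn0]
    calc D ≤ Real.sqrt (((n : ℝ) / 10) ^ 2) := Real.sqrt_le_sqrt h
      _ = n / 10 := Real.sqrt_sq (by linarith)
  have hl2nR : (l2 : ℝ) < n := by linarith
  have hl2n : l2 < n := by exact_mod_cast hl2nR
  have hl2n' : l2 ≤ n := hl2n.le
  have hP : (0 : ℝ) < (n : ℝ) / 2 - D := by linarith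
  set B := ((n : ℝ) / 2 + D) / ((n : ℝ) / 2 - D) with hBdef
  have hB1 : 1 ≤ B := by rw [le_div_iff₀ hP]; linarith
  have hB0 : (0 : ℝ) ≤ B := by linarith
  have hBP : B * ((n : ℝ) / 2 - D) = (n : ℝ) / 2 + D := by
    rw [hBdef, div_mul_cancel₀ _ hP.ne']
  have key : ∀ l : ℕ, l1 ≤ l → l < l2 →
      ((n.choose l : ℝ) ≤ B * n.choose (l + 1) ∧ (n.choose (l + 1) : ℝ) ≤ B * n.choose l) := by
    intro l hl1 hll2
    have hln : l < n := lt_of_lt_of_le hll2 hl2n'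
    have hid : (n.choose (l + 1) : ℝ) * (l + 1) = (n.choose l : ℝ) * ((n : ℝ) - l) := by
      have h := congrArg (Nat.cast : ℕ → ℝ) (Nat.choose_succ_right_eq n l)
      push_cast [Nat.cast_sub hln.le] at h
      linarith [h]
    have hlR : (l : ℝ) < n := by exact_mod_cast hln
    have hnl : (0 : ℝ) < (n : ℝ) - l := by linarith
    have hlu : ((l : ℝ) + 1) ≤ (n : ℝ) / 2 + D := by
      have hc : ((l : ℝ) + 1) ≤ l2 := by exact_mod_cast Nat.succ_le_of_lt hll2
      linarith
    have hl1R : (n : ℝ) / 2 - D ≤ l := le_trans h1 (by exact_mod_cast hl1)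
    have hnlge : (n : ℝ) / 2 - D ≤ (n : ℝ) - l := by linarith
    have hnlle : (n : ℝ) - l ≤ (n : ℝ) / 2 + D := by linarith
    have hl1ge : (n : ℝ) / 2 - D ≤ (l : ℝ) + 1 := by linarith
    constructor
    · have hBnl : ((l : ℝ) + 1) ≤ B * ((n : ℝ) - l) := by
        calc ((l : ℝ) + 1) ≤ (n : ℝ) / 2 + D := hlu
          _ = B * ((n : ℝ) / 2 - D) := hBP.symm
          _ ≤ B * ((n : ℝ) - l) := mul_le_mul_of_nonneg_left hnlge hB0
      have hc : (0 : ℝ) ≤ (n.choose (l + 1) : ℝ) := Nat.cast_nonneg _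
      have hm : (n.choose l : ℝ) * ((n : ℝ) - l) ≤ (B * n.choose (l + 1)) * ((n : ℝ) - l) := by
        rw [← hid]
        calc (n.choose (l + 1) : ℝ) * ((l : ℝ) + 1)
            ≤ (n.choose (l + 1) : ℝ) * (B * ((n : ℝ) - l)) :=
              mul_le_mul_of_nonneg_left hBnl hc
          _ = (B * n.choose (l + 1)) * ((n : ℝ) - l) := by ring
      exact le_of_mul_le_mul_right hm hnl
    · have hBnl : ((n : ℝ) - l) ≤ B * ((l : ℝ) + 1) := by
        calc ((n : ℝ) - l) ≤ (n : ℝ) / 2 + D := hnlle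
          _ = B * ((n : ℝ) / 2 - D) := hBP.symm
          _ ≤ B * ((l : ℝ) + 1) := mul_le_mul_of_nonneg_left hl1ge hB0
      have hc : (0 : ℝ) ≤ (n.choose l : ℝ) := Nat.cast_nonneg _
      have hlp : (0 : ℝ) < (l : ℝ) + 1 := by positivity
      have hm : (n.choose (l + 1) : ℝ) * ((l : ℝ) + 1) ≤ (B * n.choose l) * ((l : ℝ) + 1) := by
        rw [hid]
        calc (n.choose l : ℝ) * ((n : ℝ) - l)
            ≤ (n.choose l : ℝ) * (B * ((l : ℝ) + 1)) := mul_le_mul_of_nonneg_left hBnl hc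
          _ = (B * n.choose l) * ((l : ℝ) + 1) := by ring
      exact le_of_mul_le_mul_right hm hlp
  have hk' : l1 + (l2 - l1) = l2 := by omega
  have up : (n.choose l1 : ℝ) ≤ B ^ (l2 - l1) * n.choose l2 := by
    have h := chain_up B hB0 (fun l => (n.choose l : ℝ)) (l2 - l1) l1
      (fun j hj => (key (l1 + j) (by omega) (by omega)).1)
    rwa [hk'] at h
  have down : (n.choose l2 : ℝ) ≤ B ^ (l2 - l1) * n.choose l1 := by
    have h := chain_down B hB0 (fun l => (n.choose l : ℝ)) (l2 - l1) l1
      (fun j hj => (key (l1 + j) (by omega) (by omega)).2)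
    rwa [hk'] at h
  -- bound on k·D
  have hkcast : ((l2 - l1 : ℕ) : ℝ) = (l2 : ℝ) - l1 := by
    push_cast [Nat.cast_sub h12]; ring
  have hsqrtmul : Real.sqrt ((n : ℝ) / Real.log n) * D = Real.sqrt C1 * n := by
    rw [hDdef, ← Real.sqrt_mul (by positivity)]
    have h : (n : ℝ) / Real.log n * (C1 * n * Real.log n) = C1 * ((n : ℝ) * n) := by
      field_simp
    rw [h, Real.sqrt_mul hC1.le, Real.sqrt_mul_self hn0.le]
  have hkD : ((l2 - l1 : ℕ) : ℝ) * D ≤ ξ * n / 10 := by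
    calc ((l2 - l1 : ℕ) : ℝ) * D
        ≤ (1 / (10 * Real.sqrt C1)) * ξ * Real.sqrt ((n : ℝ) / Real.log n) * D := by
          apply mul_le_mul_of_nonneg_right _ hD0
          rw [hkcast]; exact hk
      _ = (1 / (10 * Real.sqrt C1)) * ξ * (Real.sqrt C1 * n) := by
          rw [mul_assoc, hsqrtmul]
      _ = ξ * n / 10 := by field_simp
  have hBk : B ^ (l2 - l1) ≤ Real.exp (ξ / 2) := by
    have hstep : B ≤ Real.exp (2 * D / ((n : ℝ) / 2 - D)) := by
      have h := Real.add_one_le_exp (2 * D / ((n : ℝ) / 2 - D))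
      have hBeq : B - 1 = 2 * D / ((n : ℝ) / 2 - D) := by
        rw [eq_div_iff hP.ne']
        linear_combination hBP
      linarith [h, hBeq]
    have hdiv : 2 * D / ((n : ℝ) / 2 - D) ≤ 5 * D / n := by
      rw [div_le_div_iff₀ hP hn0]
      nlinarith [mul_nonneg hD0 (sub_nonneg.mpr hD)]
    have harg : ((l2 - l1 : ℕ) : ℝ) * (2 * D / ((n : ℝ) / 2 - D)) ≤ ξ / 2 := by
      calc ((l2 - l1 : ℕ) : ℝ) * (2 * D / ((n : ℝ) / 2 - D))
          ≤ ((l2 - l1 : ℕ) : ℝ) * (5 * D / n) :=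
            mul_le_mul_of_nonneg_left hdiv (Nat.cast_nonneg _)
        _ = 5 * (((l2 - l1 : ℕ) : ℝ) * D) / n := by ring
        _ ≤ 5 * (ξ * n / 10) / n := by gcongr
        _ = ξ / 2 := by field_simp; ring
    calc B ^ (l2 - l1) ≤ (Real.exp (2 * D / ((n : ℝ) / 2 - D))) ^ (l2 - l1) :=
          pow_le_pow_left₀ hB0 hstep _
      _ = Real.exp (((l2 - l1 : ℕ) : ℝ) * (2 * D / ((n : ℝ) / 2 - D))) :=
          (Real.exp_nat_mul _ _).symm
      _ ≤ Real.exp (ξ / 2) := Real.exp_le_exp.mpr harg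
  have hexp : Real.exp (ξ / 2) ≤ 1 + ξ := by
    have h := Real.add_one_le_exp (-(ξ / 2))
    have h2 : (1 - ξ / 2) * Real.exp (ξ / 2) ≤ 1 := by
      have h3 := mul_le_mul_of_nonneg_right h (Real.exp_pos (ξ / 2)).le
      rwa [Real.exp_neg, inv_mul_cancel₀ (Real.exp_pos _).ne', show -(ξ/2) + 1 = 1 - ξ/2 by ring] at h3
    nlinarith [h2, Real.exp_pos (ξ / 2), hξ0, hξ1]
  have hc2 : (0 : ℝ) < n.choose l2 := by exact_mod_cast Nat.choose_pos hl2n'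
  have hc1 : (0 : ℝ) < n.choose l1 := by exact_mod_cast Nat.choose_pos (le_trans h12 hl2n')
  have hBke : B ^ (l2 - l1) ≤ 1 + ξ := le_trans hBk hexp
  have h5 : (n.choose l2 : ℝ) ≤ (1 + ξ) * n.choose l1 :=
    le_trans down (mul_le_mul_of_nonneg_right hBke hc1.le)
  have h6 : (n.choose l1 : ℝ) ≤ (1 + ξ) * n.choose l2 :=
    le_trans up (mul_le_mul_of_nonneg_right hBke hc2.le)
  constructor
  · rw [le_div_iff₀ hc2]
    calc (1 - ξ) * (n.choose l2 : ℝ) ≤ (1 - ξ) * ((1 + ξ) * n.choose l1) :=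
          mul_le_mul_of_nonneg_left h5 (by linarith)
      _ = (1 - ξ ^ 2) * n.choose l1 := by ring
      _ ≤ n.choose l1 := by nlinarith [hc1.le, sq_nonneg ξ]
  · rw [div_le_iff₀ hc2]
    exact h6
end

section
/- Let C > 0 be a constant. There exists N such that for all n ≥ N the following holds: let f : {0,1}^n → {0,1} satisfy I[f] ≥ n^{−C}, let t1 = (√C + 4)·√(n·ln n), and let M be the set of hypercube edges (v1, v2) (with v2 ≺ v1) such that n/2 − t1 ≤ L(v2) ≤ L(v1) ≤ n/2 + t1. Then the number of influential edges of f not belonging to M is at most |E_I|/n; in particular |M ∩ E_I| ≥ (1 − 1/n)·|E_I|. -/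
open Finset

/-- Level (Hamming weight) of a point of the Boolean cube. -/
def level {n : ℕ} (x : Fin n → Bool) : ℕ :=
  (Finset.univ.filter (fun i => x i = true)).card

/-- Probability, under the noise distribution `T_δ`, of obtaining the pair `(x, z)`:
`x` is uniform on `{0,1}^n` and each coordinate of `z` independently equals the
corresponding coordinate of `x` with probability `1 − δ` and is flipped with
probability `δ`. -/
noncomputable def noisePairProb (n : ℕ) (δ : ℝ) (x z : Fin n → Bool) : ℝ :=
  (1 / 2 ^ n) * ∏ i : Fin n, (if z i = x i then 1 - δ else δ)

/-- Noise sensitivity: `NS_δ[f] = Pr_{(x,z)∼T_δ}[f(x) ≠ f(z)]`. -/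
noncomputable def NS (n : ℕ) (δ : ℝ) (f : (Fin n → Bool) → Bool) : ℝ :=
  ∑ x : Fin n → Bool, ∑ z : Fin n → Bool,
    noisePairProb n δ x z * (if f x ≠ f z then 1 else 0)

/-- Influence: `I[f] = n · Pr_{x, i}[f(x) ≠ f(x^{⊕i})]`. -/
noncomputable def influence (n : ℕ) (f : (Fin n → Bool) → Bool) : ℝ :=
  (1 / 2 ^ n) * ∑ x : Fin n → Bool, ∑ i : Fin n,
    (if f x ≠ f (Function.update x i (!(x i))) then (1 : ℝ) else 0)

/-- Bias: `B[f] = Pr_{x uniform}[f(x) = 1]`. -/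
noncomputable def bias (n : ℕ) (f : (Fin n → Bool) → Bool) : ℝ :=
  (1 / 2 ^ n) * ∑ x : Fin n → Bool, (if f x = true then (1 : ℝ) else 0)

/-- The set of influential edges of `f`, each edge represented by its upper endpoint
together with the coordinate being flipped (the lower endpoint is obtained by
setting that coordinate, which equals `1`, to `0`). -/
def influentialEdges (n : ℕ) (f : (Fin n → Bool) → Bool) :
    Finset ((Fin n → Bool) × Fin n) :=
  Finset.univ.filter (fun p =>
    p.1 p.2 = true ∧ f p.1 ≠ f (Function.update p.1 p.2 false))

/-- The quantity `t1 = (√C + 4)·√(n·ln n)`. -/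
noncomputable def t1R (C : ℝ) (n : ℕ) : ℝ :=
  (Real.sqrt C + 4) * Real.sqrt ((n : ℝ) * Real.log n)

/-- The predicate saying that the edge `p` (upper endpoint `p.1`, lower endpoint
obtained by setting coordinate `p.2` to `0`) belongs to the set `M` of middle edges:
both endpoint levels lie in `[n/2 − t1, n/2 + t1]`. -/
def inMiddle (n : ℕ) (t1 : ℝ) (p : (Fin n → Bool) × Fin n) : Prop :=
  (n : ℝ) / 2 - t1 ≤ (level (Function.update p.1 p.2 false) : ℝ) ∧
    (level p.1 : ℝ) ≤ (n : ℝ) / 2 + t1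

noncomputable instance (n : ℕ) (t1 : ℝ) : DecidablePred (inMiddle n t1) :=
  fun p => inferInstanceAs (Decidable (_ ∧ _))

lemma level_update_false {n : ℕ} (x : Fin n → Bool) (i : Fin n) (h : x i = true) :
    ((level (Function.update x i false) : ℝ)) = (level x : ℝ) - 1 := by
  classical
  have h1 : (univ.filter fun j => Function.update x i false j = true)
      = (univ.filter fun j => x j = true).erase i := by
    ext j
    simp only [mem_filter, mem_univ, true_and, mem_erase, Function.update_apply]
    rcases eq_or_ne j i with rfl | hji
    · simp
    · simp [hji]
  have hi : i ∈ univ.filter (fun j => x j = true) := by simp [h]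
  have h2 : level (Function.update x i false) = level x - 1 := by
    unfold level; rw [h1, Finset.card_erase_of_mem hi]
  have h3 : 1 ≤ level x := Finset.card_pos.mpr ⟨i, hi⟩
  rw [h2, Nat.cast_sub h3, Nat.cast_one]


lemma sum_exp_level (n : ℕ) (l : ℝ) :
    ∑ x : Fin n → Bool, Real.exp (l * ((level x : ℝ) - n / 2))
      = (Real.exp (l / 2) + Real.exp (-(l / 2))) ^ n := by
  classical
  have key : ∀ x : Fin n → Bool, Real.exp (l * ((level x : ℝ) - n / 2))
      = ∏ i : Fin n, Real.exp (l * ((if x i = true then (1:ℝ) else 0) - 1 / 2)) := by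
    intro x
    rw [← Real.exp_sum]
    congr 1
    rw [← Finset.mul_sum]
    congr 1
    rw [Finset.sum_sub_distrib]
    have hlev : (level x : ℝ) = ∑ i : Fin n, (if x i = true then (1:ℝ) else 0) := by
      unfold level
      rw [Finset.sum_boole]
    have : ∑ _i : Fin n, (1:ℝ)/2 = n / 2 := by
      simp [Finset.sum_const]
      ring
    rw [hlev, this]
  simp_rw [key]
  rw [← Fintype.prod_sum (fun (_ : Fin n) (b : Bool) =>
        Real.exp (l * ((if b = true then (1:ℝ) else 0) - 1 / 2)))]
  have hb : ∑ b : Bool, Real.exp (l * ((if b = true then (1:ℝ) else 0) - 1 / 2))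
      = Real.exp (l / 2) + Real.exp (-(l / 2)) := by
    rw [Fintype.sum_bool]
    norm_num
    ring_nf
  rw [hb]
  simp

lemma tail_bound (n : ℕ) (hn : 0 < n) (t : ℝ) (ht : 0 ≤ t) :
    (((univ : Finset (Fin n → Bool)).filter
        (fun x => t ≤ |(level x : ℝ) - n / 2|)).card : ℝ)
      ≤ 2 * 2 ^ n * Real.exp (-2 * t ^ 2 / n) := by
  classical
  have hnR : (0:ℝ) < n := by exact_mod_cast hn
  set l : ℝ := 4 * t / n with hl_def
  have hl : 0 ≤ l := by positivity
  set A := (univ : Finset (Fin n → Bool)).filter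
      (fun x => t ≤ |(level x : ℝ) - n / 2|) with hA
  have step1 : (A.card : ℝ) * Real.exp (l * t)
      ≤ ∑ x : Fin n → Bool,
        (Real.exp (l * ((level x : ℝ) - n / 2)) + Real.exp ((-l) * ((level x : ℝ) - n / 2))) := by
    have h1 : (A.card : ℝ) * Real.exp (l * t) = ∑ _x ∈ A, Real.exp (l * t) := by
      rw [Finset.sum_const, nsmul_eq_mul]
    rw [h1]
    calc ∑ _x ∈ A, Real.exp (l * t)
        ≤ ∑ x ∈ A, (Real.exp (l * ((level x : ℝ) - n / 2))
            + Real.exp ((-l) * ((level x : ℝ) - n / 2))) := ?_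
      _ ≤ ∑ x : Fin n → Bool, (Real.exp (l * ((level x : ℝ) - n / 2))
            + Real.exp ((-l) * ((level x : ℝ) - n / 2))) :=
          Finset.sum_le_sum_of_subset_of_nonneg (Finset.subset_univ _)
            (fun x _ _ => by positivity)
    refine Finset.sum_le_sum ?_
    intro x hx
    have hx' : t ≤ |(level x : ℝ) - n / 2| := (Finset.mem_filter.mp hx).2
    set d := (level x : ℝ) - n / 2
    have h2 : l * t ≤ l * |d| := mul_le_mul_of_nonneg_left hx' hl
    have h3 : Real.exp (l * |d|) ≤ Real.exp (l * d) + Real.exp ((-l) * d) := by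
      rcases abs_cases d with ⟨he, _⟩ | ⟨he, _⟩
      · rw [he]; nlinarith [Real.exp_pos ((-l) * d)]
      · rw [he]
        have : l * -d = (-l) * d := by ring
        rw [this]
        nlinarith [Real.exp_pos (l * d)]
    exact (Real.exp_le_exp.mpr h2).trans h3
  have step2 : ∑ x : Fin n → Bool,
        (Real.exp (l * ((level x : ℝ) - n / 2)) + Real.exp ((-l) * ((level x : ℝ) - n / 2)))
      = 2 * (Real.exp (l / 2) + Real.exp (-(l / 2))) ^ n := by
    rw [Finset.sum_add_distrib, sum_exp_level n l, sum_exp_level n (-l)]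
    have : Real.exp (-l / 2) + Real.exp (-(-l / 2)) = Real.exp (l / 2) + Real.exp (-(l / 2)) := by
      ring_nf
    rw [this]; ring
  have step3 : (Real.exp (l / 2) + Real.exp (-(l / 2))) ^ n
      ≤ 2 ^ n * Real.exp (n * l ^ 2 / 8) := by
    have hcosh : Real.exp (l / 2) + Real.exp (-(l / 2)) = 2 * Real.cosh (l / 2) := by
      rw [Real.cosh_eq]; ring
    have hc : Real.cosh (l / 2) ≤ Real.exp ((l / 2) ^ 2 / 2) := Real.cosh_le_exp_half_sq _
    have h4 : Real.exp (l / 2) + Real.exp (-(l / 2)) ≤ 2 * Real.exp (l ^ 2 / 8) := by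
      rw [hcosh]
      have : (l / 2) ^ 2 / 2 = l ^ 2 / 8 := by ring
      linarith [this ▸ hc]
    calc (Real.exp (l / 2) + Real.exp (-(l / 2))) ^ n
        ≤ (2 * Real.exp (l ^ 2 / 8)) ^ n := by
          apply pow_le_pow_left₀ (by positivity) h4
      _ = 2 ^ n * Real.exp (n * l ^ 2 / 8) := by
          rw [mul_pow, ← Real.exp_nat_mul]
          ring_nf
  have hfinal : (A.card : ℝ) * Real.exp (l * t) ≤ 2 * 2 ^ n * Real.exp (n * l ^ 2 / 8) := by
    calc (A.card : ℝ) * Real.exp (l * t) ≤ _ := step1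
      _ = 2 * (Real.exp (l / 2) + Real.exp (-(l / 2))) ^ n := step2
      _ ≤ 2 * (2 ^ n * Real.exp (n * l ^ 2 / 8)) := by linarith [step3]
      _ = 2 * 2 ^ n * Real.exp (n * l ^ 2 / 8) := by ring
  have hexp : n * l ^ 2 / 8 - l * t = -2 * t ^ 2 / n := by
    rw [hl_def]; field_simp; ring
  have hres : (A.card : ℝ) ≤ 2 * 2 ^ n * Real.exp (n * l ^ 2 / 8 - l * t) := by
    calc (A.card : ℝ) = (A.card : ℝ) * Real.exp (l * t) / Real.exp (l * t) := by
          field_simp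
      _ ≤ 2 * 2 ^ n * Real.exp (n * l ^ 2 / 8) / Real.exp (l * t) := by
          gcongr
      _ = 2 * 2 ^ n * Real.exp (n * l ^ 2 / 8 - l * t) := by
          rw [Real.exp_sub]; ring
  rw [hexp] at hres
  exact hres

lemma influence_eq_card (n : ℕ) (f : (Fin n → Bool) → Bool) :
    influence n f = 2 * ((influentialEdges n f).card : ℝ) / 2 ^ n := by
  classical
  unfold influence
  set S := (univ : Finset ((Fin n → Bool) × Fin n)).filter
      (fun p => f p.1 ≠ f (Function.update p.1 p.2 (!(p.1 p.2)))) with hS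
  have hsum : (∑ x : Fin n → Bool, ∑ i : Fin n,
      (if f x ≠ f (Function.update x i (!(x i))) then (1:ℝ) else 0)) = (S.card : ℝ) := by
    rw [hS, ← Finset.sum_boole]
    exact (Fintype.sum_prod_type (fun p : (Fin n → Bool) × Fin n =>
      if f p.1 ≠ f (Function.update p.1 p.2 (!(p.1 p.2))) then (1:ℝ) else 0)).symm
  rw [hsum]
  have hScard : S.card = 2 * (influentialEdges n f).card := by
    have hsplit : (S.filter (fun p => p.1 p.2 = true)).card
        + (S.filter (fun p => ¬ (p.1 p.2 = true))).card = S.card :=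
      Finset.card_filter_add_card_filter_not _
    have htrue : S.filter (fun p => p.1 p.2 = true) = influentialEdges n f := by
      ext p
      simp only [hS, influentialEdges, Finset.mem_filter, Finset.mem_univ, true_and]
      constructor
      · rintro ⟨hne, ht⟩
        refine ⟨ht, ?_⟩
        rwa [ht, Bool.not_true] at hne
      · rintro ⟨ht, hne⟩
        exact ⟨by rwa [ht, Bool.not_true], ht⟩
    have hfalse : (S.filter (fun p => ¬ (p.1 p.2 = true))).card
        = (influentialEdges n f).card := by
      apply Finset.card_bij'
        (i := fun p _ => ((Function.update p.1 p.2 true, p.2) : (Fin n → Bool) × Fin n))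
        (j := fun q _ => ((Function.update q.1 q.2 false, q.2) : (Fin n → Bool) × Fin n))
      · intro p hp
        simp only [hS, Finset.mem_filter, Finset.mem_univ, true_and, Bool.not_eq_true] at hp
        obtain ⟨hne, hf0⟩ := hp
        rw [hf0, Bool.not_false] at hne
        simp only [influentialEdges, Finset.mem_filter, Finset.mem_univ, true_and]
        constructor
        · simp [Function.update_self]
        · have h1 : Function.update (Function.update p.1 p.2 true) p.2 false = p.1 := by
            rw [Function.update_idem, ← hf0, Function.update_eq_self]
          rw [h1]
          exact fun h => hne h.symm
      · intro q hq
        simp only [influentialEdges, Finset.mem_filter, Finset.mem_univ, true_and] at hq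
        obtain ⟨ht, hne⟩ := hq
        simp only [hS, Finset.mem_filter, Finset.mem_univ, true_and, Bool.not_eq_true]
        constructor
        · have h1 : Function.update (Function.update q.1 q.2 false) q.2
              (!(Function.update q.1 q.2 false) q.2) = q.1 := by
            simp only [Function.update_self, Bool.not_false]
            rw [Function.update_idem, ← ht, Function.update_eq_self]
          rw [h1]
          exact fun h => hne h.symm
        · simp [Function.update_self]
      · intro p hp
        simp only [hS, Finset.mem_filter, Finset.mem_univ, true_and, Bool.not_eq_true] at hp
        rw [Function.update_idem, ← hp.2, Function.update_eq_self]
      · intro q hq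
        simp only [influentialEdges, Finset.mem_filter, Finset.mem_univ, true_and] at hq
        rw [Function.update_idem, ← hq.1, Function.update_eq_self]
    rw [htrue] at hsplit
    omega
  rw [hScard]
  push_cast
  ring

/-- Let `C > 0`. For all sufficiently large `n`, if `I[f] ≥ n^{−C}`,
`t1 = (√C + 4)·√(n·ln n)`, and `M` is the set of edges `(v1, v2)` (with `v2 ≺ v1`)
whose endpoint levels lie in `[n/2 − t1, n/2 + t1]`, then the number of influential
edges outside `M` is at most `|E_I|/n`; in particular
`|M ∩ E_I| ≥ (1 − 1/n)·|E_I|`. -/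
theorem influential_edges_mostly_middle (C : ℝ) (hC : 0 < C) :
    ∃ N : ℕ, ∀ n : ℕ, N ≤ n → ∀ f : (Fin n → Bool) → Bool,
      (n : ℝ) ^ (-C) ≤ influence n f →
      ((((influentialEdges n f).filter (fun p => ¬ inMiddle n (t1R C n) p)).card : ℝ)
          ≤ ((influentialEdges n f).card : ℝ) / n ∧
        (1 - 1 / (n : ℝ)) * ((influentialEdges n f).card : ℝ)
          ≤ (((influentialEdges n f).filter (fun p => inMiddle n (t1R C n) p)).card : ℝ)) := by
  classical
  refine ⟨4, fun n hn f hf => ?_⟩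
  have hn0 : 0 < n := by omega
  have hnR : (0:ℝ) < n := by exact_mod_cast hn0
  have hn4 : (4:ℝ) ≤ (n:ℝ) := by exact_mod_cast hn
  set L := Real.log n with hL
  have hL1 : 1 ≤ L := by
    rw [hL, Real.le_log_iff_exp_le hnR]
    calc Real.exp 1 ≤ 2.7182818286 := le_of_lt Real.exp_one_lt_d9
      _ ≤ 4 := by norm_num
      _ ≤ (n:ℝ) := hn4
  set s := Real.sqrt ((n:ℝ) * L) with hs
  have hs_sq : s ^ 2 = (n:ℝ) * L := Real.sq_sqrt (by positivity)
  have hs1 : 1 ≤ s := by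
    rw [hs, show (1:ℝ) = Real.sqrt 1 by simp]
    exact Real.sqrt_le_sqrt (by nlinarith)
  have hsC : 0 ≤ Real.sqrt C := Real.sqrt_nonneg _
  have hCsq : Real.sqrt C ^ 2 = C := Real.sq_sqrt hC.le
  have ht1 : t1R C n = (Real.sqrt C + 4) * s := by rw [t1R, hs, hL]
  set t : ℝ := t1R C n - 1 with ht
  have htge : (Real.sqrt C + 3) * s ≤ t := by rw [ht, ht1]; nlinarith
  have ht0 : 0 ≤ t := by nlinarith
  -- subset step
  set A := (univ : Finset (Fin n → Bool)).filter
      (fun x => t ≤ |(level x : ℝ) - n / 2|) with hA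
  clear_value L s t A
  have hsub : (influentialEdges n f).filter (fun p => ¬ inMiddle n (t1R C n) p)
      ⊆ (univ : Finset ((Fin n → Bool) × Fin n)).filter
        (fun p => t ≤ |(level p.1 : ℝ) - n / 2|) := by
    intro p hp
    simp only [Finset.mem_filter, Finset.mem_univ, true_and] at hp ⊢
    obtain ⟨hmem, hpm⟩ := hp
    rw [influentialEdges, Finset.mem_filter] at hmem
    obtain ⟨_, hpt, _⟩ := hmem
    rw [inMiddle, not_and_or, not_le, not_le] at hpm
    have hupd := level_update_false p.1 p.2 hpt
    rcases hpm with h | h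
    · rw [hupd] at h
      have h2 := neg_le_abs ((level p.1 : ℝ) - n / 2)
      rw [ht]; linarith
    · have h2 := le_abs_self ((level p.1 : ℝ) - n / 2)
      rw [ht]; linarith
  have hcardprod : ((univ : Finset ((Fin n → Bool) × Fin n)).filter
      (fun p => t ≤ |(level p.1 : ℝ) - n / 2|)) = A ×ˢ (univ : Finset (Fin n)) := by
    ext p
    simp only [Finset.mem_filter, Finset.mem_product, Finset.mem_univ, true_and, and_true, hA]
  have hout_nat : ((influentialEdges n f).filter (fun p => ¬ inMiddle n (t1R C n) p)).card
      ≤ A.card * n := by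
    calc _ ≤ _ := Finset.card_le_card hsub
      _ = A.card * n := by
          rw [hcardprod, Finset.card_product, Finset.card_univ, Fintype.card_fin]
  have htail := tail_bound n hn0 t ht0
  rw [← hA] at htail
  -- exponent bound
  have hexp1 : (2*C+18) * L ≤ 2 * t ^ 2 / n := by
    have h1 : ((Real.sqrt C + 3) * s) ^ 2 ≤ t ^ 2 :=
      pow_le_pow_left₀ (by positivity) htge 2
    have h3 : (C + 9) * ((n:ℝ) * L) ≤ t ^ 2 := by nlinarith
    rw [le_div_iff₀ hnR]
    calc (2*C+18) * L * n = 2 * ((C + 9) * ((n:ℝ) * L)) := by ring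
      _ ≤ 2 * t ^ 2 := by linarith
  have hX : Real.exp (-2 * t ^ 2 / n) ≤ Real.exp (-((2*C+18) * L)) := by
    apply Real.exp_le_exp.mpr
    have : -2 * t ^ 2 / (n:ℝ) = -(2 * t ^ 2 / n) := by ring
    rw [this]
    linarith
  set E := ((influentialEdges n f).card : ℝ) with hE_def
  set out := (((influentialEdges n f).filter
      (fun p => ¬ inMiddle n (t1R C n) p)).card : ℝ) with hout_def
  clear_value E out
  have houtb : out ≤ (n:ℝ) * (2 * 2 ^ n * Real.exp (-((2*C+18)*L))) := by
    calc out ≤ (A.card : ℝ) * n := by rw [hout_def]; exact_mod_cast hout_nat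
      _ ≤ (2 * 2 ^ n * Real.exp (-2 * t ^ 2 / n)) * n :=
          mul_le_mul_of_nonneg_right htail hnR.le
      _ ≤ (2 * 2 ^ n * Real.exp (-((2*C+18)*L))) * n := by
          gcongr
      _ = (n:ℝ) * (2 * 2 ^ n * Real.exp (-((2*C+18)*L))) := by ring
  have hEb : 2 ^ n * Real.exp (-(C*L)) / 2 ≤ E := by
    have h1 := influence_eq_card n f
    have h2 : (n:ℝ) ^ (-C) = Real.exp (-(C*L)) := by
      rw [Real.rpow_def_of_pos hnR, hL]; ring_nf
    rw [h2, h1] at hf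
    have hp2 : (0:ℝ) < 2 ^ n := by positivity
    rw [le_div_iff₀ hp2] at hf
    linarith
  have hexp3 : (4:ℝ) * n ^ 2 ≤ Real.exp ((C+18)*L) := by
    have h1 : Real.exp (3*L) = (n:ℝ)^3 := by
      rw [show (3:ℝ)*L = L + L + L by ring, Real.exp_add, Real.exp_add, hL,
        Real.exp_log hnR]
      ring
    have h2 : Real.exp (3*L) ≤ Real.exp ((C+18)*L) := by
      exact Real.exp_le_exp.mpr
        (mul_le_mul_of_nonneg_right (by linarith) (by linarith))
    nlinarith
  have hkey : (n:ℝ) * (2 * 2 ^ n * Real.exp (-((2*C+18)*L)))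
      ≤ (2 ^ n * Real.exp (-(C*L)) / 2) / n := by
    rw [div_div, le_div_iff₀ (by positivity)]
    have hY : Real.exp (-(C*L)) = Real.exp (-((2*C+18)*L)) * Real.exp ((C+18)*L) := by
      rw [← Real.exp_add]; ring_nf
    rw [hY]
    calc (n:ℝ) * (2 * 2 ^ n * Real.exp (-((2*C+18)*L))) * (2 * n)
        = (4 * n ^ 2) * (2 ^ n * Real.exp (-((2*C+18)*L))) := by ring
      _ ≤ Real.exp ((C+18)*L) * (2 ^ n * Real.exp (-((2*C+18)*L))) :=
          mul_le_mul_of_nonneg_right hexp3 (by positivity)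
      _ = 2 ^ n * (Real.exp (-((2*C+18)*L)) * Real.exp ((C+18)*L)) := by ring
  have hout_final : out ≤ E / n := by
    calc out ≤ _ := houtb
      _ ≤ (2 ^ n * Real.exp (-(C*L)) / 2) / n := hkey
      _ ≤ E / n := by gcongr
  refine ⟨hout_final, ?_⟩
  have hsplit := Finset.card_filter_add_card_filter_not
    (s := influentialEdges n f) (p := fun p => inMiddle n (t1R C n) p)
  have hsplitR : (((influentialEdges n f).filter
        (fun p => inMiddle n (t1R C n) p)).card : ℝ) + out = E := by
    rw [hout_def, hE_def]
    exact_mod_cast hsplit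
  have hring : (1 - 1/(n:ℝ)) * E = E - E / n := by
    field_simp
  linarith
end

section
/- Fix a constant C1 ≥ 1. There exists N such that for all n ≥ N the following holds: let θ be the smallest integer greater than n/2 such that Pr_{x uniform on {0,1}^n}[L(x) > θ] ≤ 1/n^{C1}. Then Pr_{x uniform on {0,1}^n}[L(x) > θ] ≥ 1/(3·n^{C1}); that is, the bias of the threshold function f0(x) = 1 iff L(x) > θ satisfies 1/(3·n^{C1}) ≤ B[f0] ≤ 1/n^{C1}. -/
open Finset

/-- `tailProb n θ = Pr_{x uniform on {0,1}^n}[L(x) > θ]`. -/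
noncomputable def tailProb (n θ : ℕ) : ℝ :=
  (1 / 2 ^ n) * ∑ x : Fin n → Bool, (if θ < level x then (1 : ℝ) else 0)

/-- `isMinimalThreshold C1 n θ` says that `θ` is the smallest integer greater than
`n/2` such that `Pr[L(x) > θ] ≤ 1/n^{C1}`. -/
def isMinimalThreshold (C1 : ℝ) (n θ : ℕ) : Prop :=
  (n : ℝ) / 2 < (θ : ℝ) ∧ tailProb n θ ≤ 1 / (n : ℝ) ^ C1 ∧
    ∀ θ' : ℕ, (n : ℝ) / 2 < (θ' : ℝ) → tailProb n θ' ≤ 1 / (n : ℝ) ^ C1 → θ ≤ θ'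

def Cnt (n k : ℕ) : ℕ := ∑ j ∈ Finset.Icc (k+1) n, n.choose j

lemma card_level_eq (n j : ℕ) :
    (Finset.univ.filter (fun x : Fin n → Bool => level x = j)).card = n.choose j := by
  have h : n.choose j = (Finset.powersetCard j (Finset.univ : Finset (Fin n))).card := by
    rw [Finset.card_powersetCard, Finset.card_univ, Fintype.card_fin]
  rw [h]
  apply Finset.card_bij (fun x _ => Finset.univ.filter (fun i => x i = true))
  · intro x hx
    simp only [Finset.mem_filter, Finset.mem_univ, true_and] at hx
    simp only [Finset.mem_powersetCard]
    exact ⟨Finset.subset_univ _, hx⟩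
  · intro x hx y hy h
    funext i
    have := Finset.ext_iff.1 h i
    simp at this
    cases hxi : x i <;> cases hyi : y i <;> simp [hxi, hyi] at this ⊢
  · intro S hS
    refine ⟨fun i => i ∈ S, ?_, ?_⟩
    · simp only [Finset.mem_powersetCard] at hS
      rw [Finset.mem_filter]
      refine ⟨Finset.mem_univ _, ?_⟩
      simp only [level]
      rw [← hS.2]
      congr 1
      ext i; simp
    · ext i; simp

lemma level_le {n : ℕ} (x : Fin n → Bool) : level x ≤ n := by
  classical
  calc (Finset.univ.filter (fun i => x i = true)).card ≤ (Finset.univ : Finset (Fin n)).card :=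
        Finset.card_filter_le _ _
    _ = n := by simp

lemma tailProb_eq (n k : ℕ) : tailProb n k = (Cnt n k : ℝ) / 2 ^ n := by
  classical
  have h1 : ∑ x : Fin n → Bool, (if k < level x then (1 : ℝ) else 0)
      = ((Finset.univ.filter (fun x : Fin n → Bool => k < level x)).card : ℝ) := by
    rw [Finset.sum_boole]
  have h2 : (Finset.univ.filter (fun x : Fin n → Bool => k < level x)).card
      = Cnt n k := by
    rw [Finset.card_eq_sum_card_fiberwise
      (f := level) (t := Finset.Icc (k+1) n) (fun x hx => by
        simp only [Finset.mem_coe, Finset.mem_filter] at hx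
        exact Finset.mem_Icc.2 ⟨hx.2, level_le x⟩)]
    apply Finset.sum_congr rfl
    intro j hj
    rw [Finset.filter_filter, ← card_level_eq n j]
    congr 1
    apply Finset.filter_congr
    intro x _
    simp only [Finset.mem_Icc] at hj
    constructor
    · rintro ⟨_, h⟩; exact h
    · rintro h; exact ⟨by omega, h⟩
  rw [tailProb, h1, h2]
  ring

lemma cnt_exp_bound (n k : ℕ) : 2 ^ (k+1) * Cnt n k ≤ 3 ^ n := by
  have h1 : 2 ^ (k+1) * Cnt n k ≤ ∑ j ∈ Finset.Icc (k+1) n, 2 ^ j * n.choose j := by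
    rw [Cnt, Finset.mul_sum]
    apply Finset.sum_le_sum
    intro j hj
    exact Nat.mul_le_mul_right _ (Nat.pow_le_pow_right (by norm_num) (Finset.mem_Icc.1 hj).1)
  have h2 : ∑ j ∈ Finset.Icc (k+1) n, 2 ^ j * n.choose j
      ≤ ∑ j ∈ Finset.range (n+1), 2 ^ j * n.choose j := by
    apply Finset.sum_le_sum_of_subset
    intro j hj
    simp only [Finset.mem_Icc] at hj
    simp only [Finset.mem_range]
    omega
  have h3 : ∑ j ∈ Finset.range (n+1), 2 ^ j * n.choose j = 3 ^ n := by
    have := add_pow 2 1 n (R := ℕ)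
    simpa using this.symm
  omega

lemma cnt_anti (n : ℕ) {a b : ℕ} (h : a ≤ b) : Cnt n b ≤ Cnt n a :=
  Finset.sum_le_sum_of_subset (Finset.Icc_subset_Icc_left (by omega))

lemma icc_insert (k n : ℕ) (h : k ≤ n) :
    Finset.Icc k n = insert k (Finset.Icc (k+1) n) := by
  ext j
  simp only [Finset.mem_Icc, Finset.mem_insert]
  omega

lemma cnt_split (n k : ℕ) (hk1 : 1 ≤ k) (hkn : k ≤ n) :
    Cnt n (k-1) = n.choose k + Cnt n k := by
  rw [Cnt, Cnt]
  have h1 : k - 1 + 1 = k := by omega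
  rw [h1, icc_insert k n hkn, Finset.sum_insert (by simp)]

lemma cnt_odd (m : ℕ) : Cnt (2*m+1) m = 4 ^ m := by
  have hsplit : ∑ j ∈ Finset.range (m+1), (2*m+1).choose j + Cnt (2*m+1) m
      = ∑ j ∈ Finset.range (2*m+2), (2*m+1).choose j := by
    rw [Cnt, show Finset.Icc (m+1) (2*m+1) = Finset.Ico (m+1) (2*m+2) by
      rw [← Finset.Ico_add_one_right_eq_Icc]; rfl]
    rw [Finset.range_eq_Ico, Finset.range_eq_Ico]
    exact Finset.sum_Ico_consecutive _ (by omega) (by omega)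
  have h1 := Nat.sum_range_choose_halfway m
  have h2 := Nat.sum_range_choose (2*m+1)
  rw [show 2*m+1+1 = 2*m+2 from rfl] at h2
  have h3 : (2:ℕ) ^ (2*m+1) = 2 * 4 ^ m := by
    rw [pow_succ, pow_mul, show ((2:ℕ)^2) = 4 by norm_num]; ring
  omega

lemma cnt_half (n : ℕ) (hn : 1 ≤ n) : 2 ^ n ≤ 4 * Cnt n (n / 2) := by
  rcases Nat.even_or_odd n with ⟨m, hm⟩ | ⟨m, hm⟩
  · obtain ⟨t, rfl⟩ : ∃ t, m = t + 1 := ⟨m - 1, by omega⟩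
    have hn2 : n / 2 = t + 1 := by omega
    have key : Cnt (2*t+1) t ≤ Cnt n (t+1) := by
      rw [Cnt, Cnt]
      have hmap : (Finset.Icc (t+1) (2*t+1)).map (addRightEmbedding 1)
          = Finset.Icc (t+2) n := by
        rw [Finset.map_add_right_Icc]
        congr 1 <;> omega
      calc ∑ j ∈ Finset.Icc (t+1) (2*t+1), (2*t+1).choose j
          = ∑ j ∈ Finset.Icc (t+2) n, (2*t+1).choose (j-1) := by
            rw [← hmap, Finset.sum_map]
            apply Finset.sum_congr rfl
            intro i _
            simp [addRightEmbedding]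
        _ ≤ ∑ j ∈ Finset.Icc (t+2) n, n.choose j := by
            apply Finset.sum_le_sum
            intro j hj
            simp only [Finset.mem_Icc] at hj
            obtain ⟨i, rfl⟩ : ∃ i, j = i + 1 := ⟨j - 1, by omega⟩
            have hne : n = (2*t+1) + 1 := by omega
            rw [hne, Nat.choose_succ_succ]
            simp
    have hco := cnt_odd t
    have h3 : (2:ℕ) ^ n = 4 * 4 ^ t := by
      have hn' : n = 2*(t+1) := by omega
      rw [hn', pow_mul, show ((2:ℕ)^2) = 4 by norm_num, pow_succ]
      ring
    rw [hn2, h3]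
    have h4 : (4:ℕ) ^ t ≤ Cnt n (t+1) := hco ▸ key
    exact Nat.mul_le_mul_left 4 h4
  · have hn2 : n / 2 = m := by omega
    have h := cnt_odd m
    rw [hn2, hm, h]
    have h3 : (2:ℕ) ^ (2*m+1) = 2 * 4 ^ m := by
      rw [pow_succ, pow_mul, show ((2:ℕ)^2) = 4 by norm_num]; ring
    rw [h3]
    exact Nat.mul_le_mul_right (4^m) (by norm_num)

lemma r_lt_one : (3:ℝ) / 2 ^ ((5:ℝ)/3) < 1 := by
  have h2 : (0:ℝ) < 2 ^ ((5:ℝ)/3) := Real.rpow_pos_of_pos (by norm_num) _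
  rw [div_lt_one h2]
  have hcube : ((3:ℝ))^(3:ℕ) < (2 ^ ((5:ℝ)/3))^(3:ℕ) := by
    rw [← Real.rpow_natCast (2 ^ ((5:ℝ)/3)) 3, ← Real.rpow_mul (by norm_num : (0:ℝ) ≤ 2),
      show ((5:ℝ)/3*(3:ℕ)) = ((5:ℕ):ℝ) by push_cast; ring, Real.rpow_natCast]
    norm_num
  exact lt_of_pow_lt_pow_left₀ 3 (le_of_lt h2) hcube

lemma eventually_small (C1 : ℝ) :
    ∃ N : ℕ, ∀ n : ℕ, N ≤ n →
      (n:ℝ) ^ (⌈C1⌉₊ : ℕ) * ((3:ℝ) / 2 ^ ((5:ℝ)/3)) ^ n < 1 := by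
  set r : ℝ := (3:ℝ) / 2 ^ ((5:ℝ)/3) with hr
  have hrpos : 0 < r := by positivity
  have hnorm : ‖r‖ < 1 := by
    rw [Real.norm_eq_abs, abs_of_pos hrpos]; exact r_lt_one
  have hsum := summable_pow_mul_geometric_of_norm_lt_one (⌈C1⌉₊) hnorm (R := ℝ)
  have htend := hsum.tendsto_atTop_zero
  have hev := htend.eventually_lt_const (zero_lt_one)
  rw [Filter.eventually_atTop] at hev
  obtain ⟨N, hN⟩ := hev
  exact ⟨N, fun n hn => by simpa using hN n hn⟩

/-- Fix `C1 ≥ 1`. For all sufficiently large `n`: if `θ` is the smallest integer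
greater than `n/2` with `Pr[L(x) > θ] ≤ 1/n^{C1}`, then
`Pr[L(x) > θ] ≥ 1/(3·n^{C1})`; i.e. the threshold function `f0(x) = 1 ↔ L(x) > θ`
has bias `1/(3·n^{C1}) ≤ B[f0] ≤ 1/n^{C1}`. -/
theorem threshold_bias_lower (C1 : ℝ) (hC1 : 1 ≤ C1) :
    ∃ N : ℕ, ∀ n : ℕ, N ≤ n → ∀ θ : ℕ, isMinimalThreshold C1 n θ →
      1 / (3 * (n : ℝ) ^ C1) ≤ tailProb n θ := by
  obtain ⟨N2, hN2⟩ := eventually_small C1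
  refine ⟨max N2 7, ?_⟩
  intro n hn θ hmin
  obtain ⟨hhalf, hle, hminimal⟩ := hmin
  have hn7 : 7 ≤ n := le_trans (le_max_right _ _) hn
  have hnN2 : N2 ≤ n := le_trans (le_max_left _ _) hn
  have hn7R : (7:ℝ) ≤ (n:ℝ) := by exact_mod_cast hn7
  have hn1R : (1:ℝ) ≤ (n:ℝ) := by linarith
  have hpow0 : (0:ℝ) < (n:ℝ)^C1 := Real.rpow_pos_of_pos (by linarith) _
  have h2n : (0:ℝ) < (2:ℝ)^n := by positivity
  have htailn : tailProb n n = 0 := by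
    rw [tailProb_eq, Cnt, Finset.Icc_eq_empty (by omega)]
    simp
  have hθn : θ ≤ n := hminimal n (by linarith) (by rw [htailn]; positivity)
  have hθ4 : 4 ≤ θ := by
    have h3θ : (3:ℝ) < (θ:ℝ) := by linarith
    have : (3:ℕ) < θ := by exact_mod_cast h3θ
    omega
  have htail1 : 1 / (n:ℝ)^C1 < tailProb n (θ-1) := by
    by_cases hc : (n:ℝ)/2 < ((θ-1 : ℕ):ℝ)
    · by_contra h
      push_neg at h
      have := hminimal (θ-1) hc h
      omega
    · push_neg at hc
      have hc' : θ - 1 ≤ n / 2 := by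
        have h1 : ((θ-1:ℕ):ℝ) * 2 ≤ n := by linarith
        have h2 : (θ-1) * 2 ≤ n := by exact_mod_cast h1
        omega
      have hmono : tailProb n (n/2) ≤ tailProb n (θ-1) := by
        rw [tailProb_eq, tailProb_eq]
        have h := cnt_anti n hc'
        have hR : (Cnt n (n/2) : ℝ) ≤ (Cnt n (θ-1) : ℝ) := by exact_mod_cast h
        gcongr
      have hhalfq : (1:ℝ)/4 ≤ tailProb n (n/2) := by
        rw [tailProb_eq, le_div_iff₀ h2n]
        have h1 := cnt_half n (by omega)
        have h2 : (2:ℝ)^n ≤ 4 * (Cnt n (n/2) : ℝ) := by exact_mod_cast h1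
        linarith
      have hsmall : 1/(n:ℝ)^C1 ≤ 1/(n:ℝ) := by
        apply one_div_le_one_div_of_le (by linarith)
        calc (n:ℝ) = (n:ℝ)^(1:ℝ) := (Real.rpow_one _).symm
          _ ≤ (n:ℝ)^C1 := Real.rpow_le_rpow_of_exponent_le hn1R hC1
      have h7 : 1/(n:ℝ) ≤ 1/7 := by
        apply one_div_le_one_div_of_le (by norm_num) hn7R
      linarith
  by_cases hgood : θ + 1 ≤ 2 * (n - θ)
  · have hθltn : θ < n := by omega
    have he := Nat.choose_succ_right_eq n θ
    have hcc : n.choose θ ≤ 2 * n.choose (θ+1) := by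
      have h2 : n.choose θ * (θ+1) ≤ 2 * n.choose (θ+1) * (θ+1) := by
        calc n.choose θ * (θ+1) ≤ n.choose θ * (2*(n-θ)) :=
              Nat.mul_le_mul_left _ hgood
          _ = 2 * (n.choose (θ+1) * (θ+1)) := by rw [he]; ring
          _ = 2 * n.choose (θ+1) * (θ+1) := by ring
      exact Nat.le_of_mul_le_mul_right h2 (by omega)
    have hsingle : n.choose (θ+1) ≤ Cnt n θ := by
      apply Finset.single_le_sum (f := fun j => n.choose j) (fun i _ => Nat.zero_le _)
      exact Finset.mem_Icc.2 ⟨le_refl _, by omega⟩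
    have hsplit := cnt_split n θ (by omega) hθn
    have h3 : Cnt n (θ-1) ≤ 3 * Cnt n θ := by omega
    have h3R : (Cnt n (θ-1) : ℝ) ≤ 3 * (Cnt n θ : ℝ) := by exact_mod_cast h3
    have ht1 : tailProb n (θ-1) ≤ 3 * tailProb n θ := by
      rw [tailProb_eq, tailProb_eq]
      calc (Cnt n (θ-1):ℝ)/2^n ≤ (3*(Cnt n θ:ℝ))/2^n := by gcongr
        _ = 3 * ((Cnt n θ:ℝ)/2^n) := by ring
    have heq : 1/(3*(n:ℝ)^C1) = (1/(n:ℝ)^C1)/3 := by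
      rw [one_div, one_div, mul_inv]; ring
    rw [heq]
    linarith
  · exfalso
    have h3θ : 2*n ≤ 3*θ := by omega
    have hexp := cnt_exp_bound n (θ-1)
    rw [show θ-1+1 = θ by omega] at hexp
    have hexpR : (2:ℝ)^θ * (Cnt n (θ-1) : ℝ) ≤ 3^n := by exact_mod_cast hexp
    have ht : tailProb n (θ-1) ≤ (3:ℝ)^n / 2^(n+θ) := by
      rw [tailProb_eq, pow_add]
      rw [div_le_div_iff₀ h2n (by positivity)]
      calc (Cnt n (θ-1):ℝ) * ((2:ℝ)^n * 2^θ) = ((2:ℝ)^θ * (Cnt n (θ-1):ℝ)) * 2^n := by ring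
        _ ≤ 3^n * 2^n := by gcongr
    set r : ℝ := (3:ℝ)/2^((5:ℝ)/3) with hrdef
    have hr0 : 0 < r := by positivity
    have hrn : (3:ℝ)^n / 2^(n+θ) ≤ r^n := by
      have hbig : (2:ℝ) ^ (((5:ℝ)/3) * n) ≤ (2:ℝ)^(n+θ) := by
        rw [show ((2:ℝ)^(n+θ) : ℝ) = (2:ℝ)^(((n+θ:ℕ)):ℝ) from (Real.rpow_natCast 2 (n+θ)).symm]
        apply Real.rpow_le_rpow_of_exponent_le one_le_two
        push_cast
        have h1 : 2*(n:ℝ) ≤ 3*(θ:ℝ) := by exact_mod_cast h3θ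
        linarith
      have hrpow : r^n = (3:ℝ)^n / (2:ℝ)^(((5:ℝ)/3) * (n:ℕ)) := by
        rw [hrdef, div_pow]
        congr 1
        rw [← Real.rpow_natCast ((2:ℝ)^((5:ℝ)/3)) n, ← Real.rpow_mul (by norm_num : (0:ℝ) ≤ 2)]
      rw [hrpow]
      gcongr
    have hfin : r^n < 1/(n:ℝ)^C1 := by
      have h1 : (n:ℝ)^C1 ≤ (n:ℝ)^((⌈C1⌉₊:ℕ):ℝ) := by
        exact Real.rpow_le_rpow_of_exponent_le hn1R (Nat.le_ceil C1)
      have h2' := hN2 n hnN2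
      rw [← Real.rpow_natCast (n:ℝ) ⌈C1⌉₊] at h2'
      have h3' : (n:ℝ)^C1 * r^n < 1 := by
        calc (n:ℝ)^C1 * r^n ≤ (n:ℝ)^((⌈C1⌉₊:ℕ):ℝ) * r^n := by
              apply mul_le_mul_of_nonneg_right h1 (le_of_lt (pow_pos hr0 n))
          _ < 1 := h2'
      rw [lt_div_iff₀ hpow0]
      linarith [h3']
    linarith
end

section
/- Let n ≥ 1, let α ∈ [0,1] be such that α·2^n is an integer, and let δ ∈ [0,1]. If f is drawn from H^α, then E_{f∼H^α}[NS_δ[f]] = (1 − (1−δ)^n) · 2α · (2^n·(1−α))/(2^n − 1). -/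
open Finset

/-- The support of the distribution `H^α`: all functions `f : {0,1}^n → {0,1}`
with exactly `α·2^n` points mapped to `1`.  Drawing `f ∼ H^α` means drawing `f`
uniformly from this (finite) set. -/
noncomputable def Hset (n : ℕ) (α : ℝ) : Finset ((Fin n → Bool) → Bool) :=
  Finset.univ.filter (fun f =>
    ((Finset.univ.filter (fun x : Fin n → Bool => f x = true)).card : ℝ) = α * 2 ^ n)

-- sum of product over z
lemma sumP (n : ℕ) (δ : ℝ) (x : Fin n → Bool) :
    ∑ z : Fin n → Bool, ∏ i : Fin n, (if z i = x i then 1 - δ else δ) = 1 := by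
  rw [← Fintype.prod_sum (fun i (b : Bool) => if b = x i then 1 - δ else δ)]
  have h1 : ∀ i : Fin n, (∑ b : Bool, if b = x i then 1 - δ else δ) = 1 := by
    intro i; cases hx : x i <;> simp [hx] <;> ring
  exact Finset.prod_eq_one (fun i _ => h1 i)

-- per-f pair count
lemma pair_count {n : ℕ} (f : (Fin n → Bool) → Bool) (K : ℝ)
    (hf : ((univ.filter (fun x : Fin n → Bool => f x = true)).card : ℝ) = K) :
    ∑ x : Fin n → Bool, ∑ z : Fin n → Bool, (if f x ≠ f z then (1:ℝ) else 0)
      = 2 * K * (2 ^ n - K) := by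
  have htrue : ∑ z : Fin n → Bool, (if f z = true then (1:ℝ) else 0) = K := by
    rw [Finset.sum_boole]; exact hf
  have hone : ∑ z : Fin n → Bool, (1:ℝ) = 2 ^ n := by
    simp [Finset.card_univ, Fintype.card_fun]
  have hfalse : ∑ z : Fin n → Bool, (if f z = false then (1:ℝ) else 0) = 2 ^ n - K := by
    have : ∀ z : Fin n → Bool, (if f z = false then (1:ℝ) else 0)
        = 1 - (if f z = true then (1:ℝ) else 0) := by
      intro z; cases f z <;> simp
    rw [Finset.sum_congr rfl (fun z _ => this z), Finset.sum_sub_distrib, hone, htrue]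
  have hinner : ∀ x : Fin n → Bool,
      ∑ z : Fin n → Bool, (if f x ≠ f z then (1:ℝ) else 0)
        = if f x = true then 2 ^ n - K else K := by
    intro x
    cases hx : f x with
    | true =>
        rw [if_pos rfl, ← hfalse]
        apply Finset.sum_congr rfl
        intro z _; cases hz : f z <;> simp [hx, hz]
    | false =>
        rw [if_neg (by simp), ← htrue]
        apply Finset.sum_congr rfl
        intro z _; cases hz : f z <;> simp [hx, hz]
  rw [Finset.sum_congr rfl (fun x _ => hinner x)]
  rw [Finset.sum_ite, Finset.sum_const, Finset.sum_const]
  have h1 : ((univ.filter (fun x : Fin n → Bool => f x = true)).card : ℝ) = K := hf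
  have h2 : ((univ.filter (fun x : Fin n → Bool => ¬ f x = true)).card : ℝ) = 2 ^ n - K := by
    have := Finset.card_filter_add_card_filter_not
      (s := (univ : Finset (Fin n → Bool))) (p := fun x => f x = true)
    have hcu : ((univ : Finset (Fin n → Bool)).card : ℝ) = 2 ^ n := by
      simp [Finset.card_univ, Fintype.card_fun]
    have := congrArg (fun m : ℕ => (m : ℝ)) this
    push_cast at this
    rw [h1] at this
    linarith [this, hcu]
  rw [nsmul_eq_mul, nsmul_eq_mul, h1, h2]
  ring

lemma card_filter_perm {n : ℕ} (f : (Fin n → Bool) → Bool) (σ : Equiv.Perm (Fin n → Bool)) :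
    (univ.filter (fun y : Fin n → Bool => f (σ y) = true)).card
      = (univ.filter (fun y : Fin n → Bool => f y = true)).card := by
  apply Finset.card_nbij' (fun a => σ a) (fun b => σ.symm b)
  · intro a ha; simp at ha ⊢; exact ha
  · intro b hb; simp at hb ⊢; simpa using hb
  · intro a _; simp
  · intro a _; simp

lemma mem_Hset_comp {n : ℕ} (α : ℝ) (f : (Fin n → Bool) → Bool)
    (σ : Equiv.Perm (Fin n → Bool)) (hf : f ∈ Hset n α) : (f ∘ σ) ∈ Hset n α := by
  simp only [Hset, Finset.mem_filter, Finset.mem_univ, true_and] at hf ⊢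
  rw [← hf]
  exact_mod_cast congrArg (fun m : ℕ => (m : ℝ)) (card_filter_perm f σ)

lemma count_pair_const {n : ℕ} (α : ℝ) {x z x' z' : Fin n → Bool}
    (hxz : x ≠ z) (hxz' : x' ≠ z') :
    ∑ f ∈ Hset n α, (if f x ≠ f z then (1:ℝ) else 0)
      = ∑ f ∈ Hset n α, (if f x' ≠ f z' then (1:ℝ) else 0) := by
  set σ1 := Equiv.swap x x' with hσ1
  have h1 : σ1 z ≠ x' := by
    intro h
    apply hxz
    have := congrArg σ1.symm h
    simp [hσ1, Equiv.swap_apply_right] at this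
    exact this.symm
  set σ : Equiv.Perm (Fin n → Bool) := σ1.trans (Equiv.swap (σ1 z) z') with hσ
  have hσx : σ x = x' := by
    simp only [hσ, Equiv.trans_apply, hσ1, Equiv.swap_apply_left]
    exact Equiv.swap_apply_of_ne_of_ne (Ne.symm h1) hxz'.symm.symm |>.trans rfl
  have hσz : σ z = z' := by
    simp [hσ, Equiv.trans_apply, Equiv.swap_apply_left]
  apply Finset.sum_nbij' (fun f => f ∘ σ.symm) (fun f => f ∘ σ)
  · intro f hf; exact mem_Hset_comp α f σ.symm hf
  · intro f hf; exact mem_Hset_comp α f σ hf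
  · intro f _; funext y; simp
  · intro f _; funext y; simp
  · intro f _
    have e1 : (f ∘ σ.symm) x' = f x := by simp [← hσx]
    have e2 : (f ∘ σ.symm) z' = f z := by simp [← hσz]
    rw [e1, e2]


lemma Hset_nonempty {n : ℕ} (α : ℝ) (k : ℕ) (hk : (k:ℝ) = α * 2 ^ n) (hα1 : α ≤ 1) :
    (Hset n α).Nonempty := by
  have hNpos : (0:ℝ) < 2 ^ n := by positivity
  have hkle : k ≤ 2 ^ n := by
    have h : (k:ℝ) ≤ 2 ^ n := by rw [hk]; nlinarith
    exact_mod_cast h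
  obtain ⟨t, -, ht⟩ := Finset.exists_subset_card_eq
    (by simpa [Finset.card_univ, Fintype.card_fun] using hkle : k ≤ (univ : Finset (Fin n → Bool)).card)
  refine ⟨fun x => decide (x ∈ t), ?_⟩
  simp only [Hset, Finset.mem_filter, Finset.mem_univ, true_and]
  have hfil : (univ.filter (fun x : Fin n → Bool => decide (x ∈ t) = true)) = t := by
    ext x; simp
  rw [hfil, ht, hk]

/-- Let `n ≥ 1`, let `α ∈ [0,1]` with `α·2^n` an integer, and let `δ ∈ [0,1]`.
Then the expected noise sensitivity of a uniformly random `f ∼ H^α` satisfies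
`E[NS_δ[f]] = (1 − (1−δ)^n) · 2α · (2^n·(1−α))/(2^n − 1)`. -/
theorem random_function_expected_ns (n : ℕ) (hn : 1 ≤ n) (α : ℝ)
    (hα0 : 0 ≤ α) (hα1 : α ≤ 1) (hint : ∃ k : ℕ, (k : ℝ) = α * 2 ^ n)
    (δ : ℝ) (hδ0 : 0 ≤ δ) (hδ1 : δ ≤ 1) :
    (∑ f ∈ Hset n α, NS n δ f) / ((Hset n α).card : ℝ)
      = (1 - (1 - δ) ^ n) * (2 * α) * ((2 : ℝ) ^ n * (1 - α)) / ((2 : ℝ) ^ n - 1) := by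
  obtain ⟨k, hk⟩ := hint
  have hN2 : (2:ℝ) ≤ 2 ^ n := by
    calc (2:ℝ) = 2 ^ 1 := by norm_num
    _ ≤ 2 ^ n := by apply pow_le_pow_right₀ (by norm_num) hn
  have hNpos : (0:ℝ) < 2 ^ n := by positivity
  set N : ℝ := 2 ^ n with hNdef
  have hcardX : ((univ : Finset (Fin n → Bool)).card : ℝ) = N := by
    simp [Finset.card_univ, Fintype.card_fun, hNdef]
  obtain ⟨f0, hf0⟩ := Hset_nonempty α k hk hα1
  have hH0 : (0:ℝ) < ((Hset n α).card : ℝ) := by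
    exact_mod_cast Finset.card_pos.mpr ⟨f0, hf0⟩
  set x0 : Fin n → Bool := fun _ => false with hx0def
  set z0 : Fin n → Bool := fun _ => true with hz0def
  have hx0z0 : x0 ≠ z0 := by
    intro h
    have := congrFun h ⟨0, hn⟩
    simp [hx0def, hz0def] at this
  set c : ℝ := ∑ f ∈ Hset n α, (if f x0 ≠ f z0 then (1:ℝ) else 0) with hc
  have hA : ∀ x z : Fin n → Bool,
      (∑ f ∈ Hset n α, (if f x ≠ f z then (1:ℝ) else 0)) = if x = z then 0 else c := by
    intro x z
    by_cases hxz : x = z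
    · subst hxz; simp
    · rw [if_neg hxz, hc]; exact count_pair_const α hxz hx0z0
  -- Step 1: swap the sums
  have hswap : ∑ f ∈ Hset n α, NS n δ f
      = ∑ x : Fin n → Bool, ∑ z : Fin n → Bool,
          noisePairProb n δ x z * (if x = z then 0 else c) := by
    unfold NS
    rw [Finset.sum_comm]
    refine Finset.sum_congr rfl (fun x _ => ?_)
    rw [Finset.sum_comm]
    refine Finset.sum_congr rfl (fun z _ => ?_)
    rw [← Finset.mul_sum, hA]
  -- marginal of the noise distribution
  have hPsum : ∀ x : Fin n → Bool, ∑ z : Fin n → Bool, noisePairProb n δ x z = 1 / N := by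
    intro x
    unfold noisePairProb
    rw [← Finset.mul_sum, sumP, mul_one]
  have hPdiag : ∀ x : Fin n → Bool, noisePairProb n δ x x = (1 / N) * (1 - δ) ^ n := by
    intro x
    unfold noisePairProb
    simp [Finset.prod_const, Finset.card_univ, hNdef]
  -- Step 2: evaluate the weighted sum
  have hsum2 : ∑ x : Fin n → Bool, ∑ z : Fin n → Bool,
      noisePairProb n δ x z * (if x = z then 0 else c)
      = c * (1 - (1 - δ) ^ n) := by
    have hpt : ∀ x z : Fin n → Bool, noisePairProb n δ x z * (if x = z then 0 else c)
        = c * noisePairProb n δ x z - (if z = x then c * noisePairProb n δ x z else 0) := by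
      intro x z
      by_cases h : x = z
      · subst h; simp
      · rw [if_neg h, if_neg (Ne.symm h)]; ring
    calc ∑ x : Fin n → Bool, ∑ z : Fin n → Bool,
          noisePairProb n δ x z * (if x = z then 0 else c)
        = ∑ x : Fin n → Bool, ((∑ z : Fin n → Bool, c * noisePairProb n δ x z)
            - ∑ z : Fin n → Bool, (if z = x then c * noisePairProb n δ x z else 0)) := by
          refine Finset.sum_congr rfl (fun x _ => ?_)
          rw [← Finset.sum_sub_distrib]
          exact Finset.sum_congr rfl (fun z _ => hpt x z)
      _ = ∑ x : Fin n → Bool, (c * (1 / N) - c * ((1 / N) * (1 - δ) ^ n)) := by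
          refine Finset.sum_congr rfl (fun x _ => ?_)
          rw [← Finset.mul_sum, hPsum x, Finset.sum_ite_eq' univ x
            (fun z => c * noisePairProb n δ x z), if_pos (Finset.mem_univ x), hPdiag x]
      _ = c * (1 - (1 - δ) ^ n) := by
          rw [Finset.sum_const, nsmul_eq_mul, hcardX]
          have hNne : N ≠ 0 := ne_of_gt hNpos
          field_simp
  -- Step 3: determine c by double counting
  have hcval : c * (N * N - N) = ((Hset n α).card : ℝ) * (2 * (α * N) * (N - α * N)) := by
    have lhs_eq : ∑ x : Fin n → Bool, ∑ z : Fin n → Bool,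
        (∑ f ∈ Hset n α, (if f x ≠ f z then (1:ℝ) else 0)) = c * (N * N - N) := by
      calc ∑ x : Fin n → Bool, ∑ z : Fin n → Bool,
            (∑ f ∈ Hset n α, (if f x ≠ f z then (1:ℝ) else 0))
          = ∑ x : Fin n → Bool, ∑ z : Fin n → Bool, (if x = z then 0 else c) := by
            refine Finset.sum_congr rfl (fun x _ => Finset.sum_congr rfl (fun z _ => hA x z))
        _ = ∑ x : Fin n → Bool, ((∑ z : Fin n → Bool, c)
              - ∑ z : Fin n → Bool, (if z = x then c else 0)) := by
            refine Finset.sum_congr rfl (fun x _ => ?_)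
            rw [← Finset.sum_sub_distrib]
            refine Finset.sum_congr rfl (fun z _ => ?_)
            by_cases h : x = z
            · subst h; simp
            · rw [if_neg h, if_neg (Ne.symm h)]; ring
        _ = ∑ x : Fin n → Bool, (N * c - c) := by
            refine Finset.sum_congr rfl (fun x _ => ?_)
            rw [Finset.sum_const, nsmul_eq_mul, hcardX,
              Finset.sum_ite_eq' univ x (fun _ => c), if_pos (Finset.mem_univ x)]
        _ = c * (N * N - N) := by
            rw [Finset.sum_const, nsmul_eq_mul, hcardX]; ring
    have rhs_eq : ∑ x : Fin n → Bool, ∑ z : Fin n → Bool,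
        (∑ f ∈ Hset n α, (if f x ≠ f z then (1:ℝ) else 0))
        = ((Hset n α).card : ℝ) * (2 * (α * N) * (N - α * N)) := by
      calc ∑ x : Fin n → Bool, ∑ z : Fin n → Bool,
            (∑ f ∈ Hset n α, (if f x ≠ f z then (1:ℝ) else 0))
          = ∑ x : Fin n → Bool, ∑ f ∈ Hset n α,
              (∑ z : Fin n → Bool, (if f x ≠ f z then (1:ℝ) else 0)) :=
            Finset.sum_congr rfl (fun x _ => Finset.sum_comm)
        _ = ∑ f ∈ Hset n α, ∑ x : Fin n → Bool,
              (∑ z : Fin n → Bool, (if f x ≠ f z then (1:ℝ) else 0)) := Finset.sum_comm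
        _ = ∑ f ∈ Hset n α, (2 * (α * N) * (N - α * N)) := by
            refine Finset.sum_congr rfl (fun f hf => ?_)
            have hf' : ((univ.filter (fun x : Fin n → Bool => f x = true)).card : ℝ)
                = α * 2 ^ n := by
              simpa [Hset] using (Finset.mem_filter.mp hf).2
            have := pair_count f (α * 2 ^ n) hf'
            rw [hNdef]
            exact this
        _ = ((Hset n α).card : ℝ) * (2 * (α * N) * (N - α * N)) := by
            rw [Finset.sum_const, nsmul_eq_mul]
    rw [← lhs_eq, rhs_eq]
  -- Final algebra
  have hNne : N ≠ 0 := ne_of_gt hNpos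
  have hN1ne : N - 1 ≠ 0 := by intro h; nlinarith
  have hHne : ((Hset n α).card : ℝ) ≠ 0 := ne_of_gt hH0
  have hNNne : N * N - N ≠ 0 := by
    intro h
    have : N * (N - 1) = 0 := by linarith
    rcases mul_eq_zero.mp this with h' | h' <;> [exact hNne h'; exact hN1ne h']
  have hc2 : c = ((Hset n α).card : ℝ) * (2 * (α * N) * (N - α * N)) / (N * N - N) := by
    rw [eq_div_iff hNNne]; linarith [hcval]
  rw [hswap, hsum2, hc2]
  field_simp
end
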